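/- If A and B are two laminar families of subsets of a finite set S, and n is a positive integer, then there exists a subset A₀ of S such that for every set P in A ∪ B, the cardinality |A₀ ∩ P| satisfies ⌊|P|/n⌋ ≤ |A₀ ∩ P| ≤ ⌈|P|/n⌉. -/

import Mathlib

/- ========================================================================
   Proof of Nash-Williams' laminar family lemma.

   Strategy: start from the fractional solution assigning 1/n to every
   element of S, and repeatedly round it.  At each step, consider the
   elements with non-integral value; using the two laminar structures we
   find an alternating "walk" which yields a push direction `d` with
   entries in {-1,0,1} whose sum over every member with integral current
   value is zero.  Pushing along `d` as far as possible makes at least one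
   more quantity integral while preserving feasibility.
   ======================================================================== -/

namespace NWProof

section Core
variable {α β : Type*} [DecidableEq α] [DecidableEq β]

/-- side of link `i` in a walk starting with side `s₀`. -/
def sig (s₀ : Bool) (i : ℕ) : Bool := if i % 2 = 0 then s₀ else !s₀

lemma sig_succ (s₀ : Bool) (i : ℕ) : sig s₀ (i + 1) = !(sig s₀ i) := by
  unfold sig
  rcases Nat.mod_two_eq_zero_or_one i with h | h
  · have : (i+1) % 2 = 1 := by omega
    simp [h, this]
  · have : (i+1) % 2 = 0 := by omega
    simp [h, this]

lemma sig_pred (s₀ : Bool) (i : ℕ) (hi : 0 < i) : sig s₀ (i - 1) = !(sig s₀ i) := by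
  obtain ⟨j, rfl⟩ := Nat.exists_eq_add_of_le hi
  simp [Nat.add_comm, sig_succ, Bool.not_not]

lemma sig_eq_iff (s₀ : Bool) (i j : ℕ) : sig s₀ i = sig s₀ j ↔ i % 2 = j % 2 := by
  unfold sig
  rcases Nat.mod_two_eq_zero_or_one i with h | h <;>
    rcases Nat.mod_two_eq_zero_or_one j with h' | h' <;>
      simp [h, h'] <;> cases s₀ <;> simp

lemma bool_not_eq {x s : Bool} (h : x ≠ s) : (!x) = s := by
  cases x <;> cases s <;> simp_all

lemma sig_zero (s₀ : Bool) : sig s₀ 0 = s₀ := by simp [sig]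

lemma neg_one_pow_add_eq_zero {i j : ℕ} (h : i % 2 ≠ j % 2) :
    (-1 : ℤ) ^ i + (-1 : ℤ) ^ j = 0 := by
  rcases Nat.mod_two_eq_zero_or_one i with h1 | h1 <;>
    rcases Nat.mod_two_eq_zero_or_one j with h2 | h2
  · omega
  · rw [(Nat.even_iff.2 h1).neg_one_pow, (Nat.odd_iff.2 h2).neg_one_pow]; ring
  · rw [(Nat.odd_iff.2 h1).neg_one_pow, (Nat.even_iff.2 h2).neg_one_pow]; ring
  · omega

/-- sum over a fiber along an open (path) segment is zero -/
lemma path_sum_zero (G : Bool → α → Option β) (e : ℕ → α) (s₀ : Bool) (k : ℕ)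
    (hlink : ∀ i < k, G (sig s₀ i) (e i) = G (sig s₀ i) (e (i + 1)))
    (h0 : G (!s₀) (e 0) = none)
    (hk : G (sig s₀ k) (e k) = none) (s : Bool) (g : β) :
    ∑ i ∈ (Finset.Icc 0 k).filter (fun i => G s (e i) = some g), (-1 : ℤ) ^ i = 0 := by
  apply Finset.sum_involution (fun i _ => if sig s₀ i = s then i + 1 else i - 1)
  · -- sums cancel
    intro i hi
    simp only [Finset.mem_filter, Finset.mem_Icc] at hi
    by_cases hs : sig s₀ i = s
    · simp only [hs, if_true]
      apply neg_one_pow_add_eq_zero; omega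
    · simp only [hs, if_false]
      have hipos : 0 < i := by
        rcases Nat.eq_zero_or_pos i with rfl | h; swap; · exact h
        exfalso
        have : s = !s₀ := by
          refine (bool_not_eq (x := s₀) (s := s) fun h => hs ?_).symm
          rw [sig_zero]; exact h
        rw [this, h0] at hi; simp at hi
      apply neg_one_pow_add_eq_zero; omega
  · intro i hi _
    by_cases hs : sig s₀ i = s <;> simp only [hs, if_true, if_false]
    · omega
    · have hipos : 0 < i := by
        simp only [Finset.mem_filter, Finset.mem_Icc] at hi
        rcases Nat.eq_zero_or_pos i with rfl | h; swap; · exact h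
        exfalso
        have : s = !s₀ := by
          refine (bool_not_eq (x := s₀) (s := s) fun h => hs ?_).symm
          rw [sig_zero]; exact h
        rw [this, h0] at hi; simp at hi
      omega
  · -- maps into the set
    intro i hi
    simp only [Finset.mem_filter, Finset.mem_Icc] at hi ⊢
    obtain ⟨⟨-, hik⟩, hg⟩ := hi
    by_cases hs : sig s₀ i = s
    · simp only [hs, if_true]
      have hik' : i < k := by
        rcases Nat.lt_or_ge i k with h | h; · exact h
        exfalso; have : i = k := by omega
        subst this; rw [hs] at hk; rw [hk] at hg; simp at hg
      refine ⟨by omega, ?_⟩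
      rw [← hs] at hg ⊢
      rw [← hlink i hik']; exact hg
    · simp only [hs, if_false]
      have hipos : 0 < i := by
        rcases Nat.eq_zero_or_pos i with rfl | h; swap; · exact h
        exfalso
        have : s = !s₀ := by
          refine (bool_not_eq (x := s₀) (s := s) fun h => hs ?_).symm
          rw [sig_zero]; exact h
        rw [this, h0] at hg; simp at hg
      refine ⟨by omega, ?_⟩
      have hs' : sig s₀ (i - 1) = s := by
        rw [sig_pred s₀ i hipos]; exact bool_not_eq (x := sig s₀ i) (s := s) hs
      have hlt : i - 1 < k := by omega
      have := hlink (i - 1) hlt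
      rw [hs'] at this
      have hsucc : i - 1 + 1 = i := by omega
      rw [hsucc] at this
      rw [this]; exact hg
  · -- involution
    intro i hi
    simp only [Finset.mem_filter, Finset.mem_Icc] at hi
    by_cases hs : sig s₀ i = s
    · simp only [hs, if_true]
      have : sig s₀ (i + 1) ≠ s := by rw [sig_succ]; cases s <;> simp_all
      simp [this]
    · simp only [hs, if_false]
      have hipos : 0 < i := by
        rcases Nat.eq_zero_or_pos i with rfl | h; swap; · exact h
        exfalso
        have : s = !s₀ := by
          refine (bool_not_eq (x := s₀) (s := s) fun h => hs ?_).symm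
          rw [sig_zero]; exact h
        rw [this, h0] at hi; simp at hi
      have : sig s₀ (i - 1) = s := by
        rw [sig_pred s₀ i hipos]; exact bool_not_eq (x := sig s₀ i) (s := s) hs
      simp only [this, if_true]
      omega

lemma closed_sum_zero_aux (G : Bool → α → Option β) (e : ℕ → α) (s₀ : Bool)
    (lo hi : ℕ) (g₀ : β) (hlt : lo < hi)
    (hparity : lo % 2 ≠ hi % 2)
    (hlink : ∀ i, lo ≤ i → i < hi → G (sig s₀ i) (e i) = G (sig s₀ i) (e (i + 1)))
    (hpar : sig s₀ lo ≠ sig s₀ hi)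
    (hwa : G (sig s₀ hi) (e hi) = some g₀)
    (hwb : G (sig s₀ hi) (e lo) = some g₀)
    (s : Bool) (g : β) :
    ∑ i ∈ (Finset.Icc lo hi).filter (fun i => G s (e i) = some g), (-1 : ℤ) ^ i = 0 := by
  apply Finset.sum_involution
    (fun i _ => if sig s₀ i = s then (if i = hi then lo else i + 1) else (if i = lo then hi else i - 1))
  case hg₁ =>
    intro i hi'
    simp only [Finset.mem_filter, Finset.mem_Icc] at hi'
    obtain ⟨⟨hloi, hihi⟩, hg⟩ := hi'
    apply neg_one_pow_add_eq_zero
    by_cases hs : sig s₀ i = s <;> simp only [hs, if_true, if_false]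
    · by_cases hih : i = hi
      · subst hih; simp only [if_true]; omega
      · have : i < hi := lt_of_le_of_ne hihi hih
        simp only [hih, if_false]; omega
    · by_cases hil : i = lo
      · subst hil; simp only [if_true]; omega
      · have hipos : lo < i := lt_of_le_of_ne hloi (Ne.symm hil)
        simp only [hil, if_false]; omega
  case hg₃ =>
    intro i hi'
    simp only [Finset.mem_filter, Finset.mem_Icc] at hi'
    obtain ⟨⟨hloi, hihi⟩, hg⟩ := hi'
    intro _
    by_cases hs : sig s₀ i = s <;> simp only [hs, if_true, if_false]
    · by_cases hih : i = hi
      · subst hih; simp only [if_true]; omega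
      · simp only [hih, if_false]; omega
    · by_cases hil : i = lo
      · subst hil; simp only [if_true]; omega
      · have hipos : lo < i := lt_of_le_of_ne hloi (Ne.symm hil)
        simp only [hil, if_false]; omega
  case g_mem =>
    intro i hi'
    simp only [Finset.mem_filter, Finset.mem_Icc] at hi'
    obtain ⟨⟨hloi, hihi⟩, hg⟩ := hi'
    simp only [Finset.mem_filter, Finset.mem_Icc]
    by_cases hs : sig s₀ i = s <;> simp only [hs, if_true, if_false]
    · by_cases hih : i = hi
      · -- wrap: φ i = lo
        subst hih
        simp only [if_true]
        have hgg : some g = some g₀ := by rw [← hg, ← hwa, hs]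
        refine ⟨⟨le_refl lo, le_of_lt hlt⟩, ?_⟩
        rw [← hs, hwb, ← hgg]
      · have hilt : i < hi := lt_of_le_of_ne hihi hih
        simp only [hih, if_false]
        refine ⟨⟨by omega, by omega⟩, ?_⟩
        rw [← hs, ← hlink i hloi hilt, hs, hg]
    · -- s = !(sig i) = sig (i-1)  (or wrap when i = lo)
      by_cases hil : i = lo
      · subst hil
        simp only [if_true]
        have hss : s = sig s₀ hi := by
          have h1 : (!(sig s₀ i)) = s := bool_not_eq hs
          have h2 : (!(sig s₀ i)) = sig s₀ hi := bool_not_eq hpar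
          rw [← h1, h2]
        have hgg : some g = some g₀ := by rw [← hg, hss, hwb]
        refine ⟨⟨le_of_lt hlt, le_refl hi⟩, ?_⟩
        rw [hss, hwa, ← hgg]
      · have hipos : lo < i := lt_of_le_of_ne hloi (Ne.symm hil)
        simp only [hil, if_false]
        have hs' : sig s₀ (i - 1) = s := by
          rw [sig_pred s₀ i (by omega)]; exact bool_not_eq (x := sig s₀ i) (s := s) hs
        have hl := hlink (i - 1) (by omega) (by omega)
        rw [hs'] at hl
        have hsucc : i - 1 + 1 = i := by omega
        rw [hsucc] at hl
        exact ⟨⟨by omega, by omega⟩, by rw [hl, hg]⟩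
  case hg₄ =>
    intro i hi'
    simp only [Finset.mem_filter, Finset.mem_Icc] at hi'
    obtain ⟨⟨hloi, hihi⟩, hg⟩ := hi'
    by_cases hs : sig s₀ i = s
    · simp only [hs, if_true]
      by_cases hih : i = hi
      · subst hih
        simp only [if_true]
        have h2 : sig s₀ lo ≠ s := by rw [← hs]; exact hpar
        simp only [h2, if_false, if_true]
      · have hilt : i < hi := lt_of_le_of_ne hihi hih
        simp only [hih, if_false]
        have h2 : sig s₀ (i + 1) ≠ s := by
          rw [sig_succ]; rw [← hs]; cases sig s₀ i <;> simp
        have h3 : i + 1 ≠ lo := by omega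
        simp only [h2, if_false, h3, Nat.add_sub_cancel]
    · simp only [hs, if_false]
      by_cases hil : i = lo
      · subst hil
        simp only [if_true]
        have hss : sig s₀ hi = s := by
          have h1 : (!(sig s₀ i)) = s := bool_not_eq hs
          have h2 : (!(sig s₀ i)) = sig s₀ hi := bool_not_eq hpar
          rw [← h2, h1]
        simp only [hss, if_true]
      · have hipos : lo < i := lt_of_le_of_ne hloi (Ne.symm hil)
        simp only [hil, if_false]
        have hs' : sig s₀ (i - 1) = s := by
          rw [sig_pred s₀ i (by omega)]; exact bool_not_eq (x := sig s₀ i) (s := s) hs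
        have h3 : i - 1 ≠ hi := by omega
        simp only [hs', if_true, h3, if_false]
        omega

lemma closed_sum_zero (G : Bool → α → Option β) (e : ℕ → α) (s₀ : Bool)
    (lo hi : ℕ) (g₀ : β) (hlh : lo ≤ hi)
    (hlink : ∀ i, lo ≤ i → i < hi → G (sig s₀ i) (e i) = G (sig s₀ i) (e (i + 1)))
    (hpar : sig s₀ lo ≠ sig s₀ hi)
    (hwa : G (sig s₀ hi) (e hi) = some g₀)
    (hwb : G (sig s₀ hi) (e lo) = some g₀)
    (s : Bool) (g : β) :
    ∑ i ∈ (Finset.Icc lo hi).filter (fun i => G s (e i) = some g), (-1 : ℤ) ^ i = 0 := by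
  have hparity : lo % 2 ≠ hi % 2 := fun h => hpar ((sig_eq_iff s₀ lo hi).2 h)
  have hlt : lo < hi := lt_of_le_of_ne hlh (fun h => hparity (by rw [h]))
  exact closed_sum_zero_aux G e s₀ lo hi g₀ hlt hparity hlink hpar hwa hwb s g

/-- Package an alternating segment into a pushing direction `d`. -/
lemma build_d (F : Finset α) (G : Bool → α → Option β) (e : ℕ → α) (lo hi : ℕ)
    (hlh : lo ≤ hi)
    (hmem : ∀ i, lo ≤ i → i ≤ hi → e i ∈ F)
    (hinj : ∀ i j, lo ≤ i → i ≤ hi → lo ≤ j → j ≤ hi → e i = e j → i = j)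
    (hsum : ∀ (s : Bool) (g : β),
      ∑ i ∈ (Finset.Icc lo hi).filter (fun i => G s (e i) = some g), (-1 : ℤ) ^ i = 0) :
    ∃ d : α → ℤ, (∀ x, d x = 0 ∨ d x = 1 ∨ d x = -1) ∧
      (∀ x, d x ≠ 0 → x ∈ F) ∧ (∃ x, d x ≠ 0) ∧
      (∀ (s : Bool) (g : β), ∑ x ∈ F.filter (fun x => G s x = some g), d x = 0) := by
  classical
  set d : α → ℤ := fun x => ∑ i ∈ (Finset.Icc lo hi).filter (fun i => e i = x), (-1 : ℤ) ^ i
    with hd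
  have hfib : ∀ i, lo ≤ i → i ≤ hi →
      (Finset.Icc lo hi).filter (fun j => e j = e i) = {i} := by
    intro i h1 h2
    ext j
    simp only [Finset.mem_filter, Finset.mem_Icc, Finset.mem_singleton]
    constructor
    · rintro ⟨⟨hj1, hj2⟩, hj3⟩
      exact hinj j i hj1 hj2 h1 h2 hj3
    · rintro rfl
      exact ⟨⟨h1, h2⟩, rfl⟩
  have hval : ∀ i, lo ≤ i → i ≤ hi → d (e i) = (-1 : ℤ) ^ i := by
    intro i h1 h2
    rw [hd]
    simp only
    rw [hfib i h1 h2, Finset.sum_singleton]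
  refine ⟨d, ?_, ?_, ?_, ?_⟩
  · intro x
    by_cases hx : ∃ i, lo ≤ i ∧ i ≤ hi ∧ e i = x
    · obtain ⟨i, h1, h2, rfl⟩ := hx
      rw [hval i h1 h2]
      rcases Nat.even_or_odd i with h | h
      · right; left; exact h.neg_one_pow
      · right; right; exact h.neg_one_pow
    · left
      rw [hd]
      simp only
      rw [Finset.sum_eq_zero]
      intro j hj
      simp only [Finset.mem_filter, Finset.mem_Icc] at hj
      exact absurd ⟨j, hj.1.1, hj.1.2, hj.2⟩ hx
  · intro x hx
    rw [hd] at hx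
    simp only at hx
    by_contra hxF
    apply hx
    rw [Finset.sum_eq_zero]
    intro j hj
    simp only [Finset.mem_filter, Finset.mem_Icc] at hj
    exact absurd (hj.2 ▸ hmem j hj.1.1 hj.1.2) hxF
  · refine ⟨e lo, ?_⟩
    rw [hval lo (le_refl lo) hlh]
    rcases Nat.even_or_odd lo with h | h
    · rw [h.neg_one_pow]; norm_num
    · rw [h.neg_one_pow]; norm_num
  · intro s g
    have : ∀ x ∈ F.filter (fun x => G s x = some g),
        d x = ∑ i ∈ Finset.Icc lo hi, (if e i = x then (-1 : ℤ) ^ i else 0) := by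
      intro x _
      rw [hd]
      simp only
      rw [Finset.sum_filter]
    rw [Finset.sum_congr rfl this, Finset.sum_comm]
    rw [Finset.sum_congr rfl (fun i (hi' : i ∈ Finset.Icc lo hi) => ?_)]
    · -- after inner rewrite the sum is over indicator of membership
      rw [← hsum s g, Finset.sum_filter]
    · -- inner: ∑ x ∈ F.filter …, if e i = x then (-1)^i else 0 = if G s (e i) = some g then (-1)^i else 0
      rw [Finset.sum_ite_eq (F.filter (fun x => G s x = some g)) (e i) (fun _ => (-1 : ℤ) ^ i)]
      simp only [Finset.mem_Icc] at hi'
      simp only [Finset.mem_filter]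
      by_cases hg : G s (e i) = some g
      · simp [hg, hmem i hi'.1 hi'.2]
      · simp [hg]
/-- walk invariant -/
structure Walk (F : Finset α) (G : Bool → α → Option β) (k : ℕ) (e : ℕ → α) (s₀ : Bool) :
    Prop where
  mem : ∀ i ≤ k, e i ∈ F
  inj : ∀ i ≤ k, ∀ j ≤ k, e i = e j → i = j
  link : ∀ i < k, G (sig s₀ i) (e i) = G (sig s₀ i) (e (i + 1)) ∧
    (G (sig s₀ i) (e i)).isSome
  start : G (!s₀) (e 0) = none ∨ ∀ x ∈ F, ∀ t, (G t x).isSome = true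

theorem Walk.card_le {F : Finset α} {G : Bool → α → Option β} {k : ℕ} {e : ℕ → α} {s₀ : Bool}
    (W : Walk F G k e s₀) : k + 1 ≤ F.card := by
  have : (Finset.range (k+1)).card ≤ F.card := by
    apply Finset.card_le_card_of_injOn e
    · intro i hi
      simp only [Finset.mem_coe, Finset.mem_range] at hi
      exact W.mem i (by omega)
    · intro i hi j hj hij
      simp only [Finset.mem_coe, Finset.mem_range] at hi hj
      exact W.inj i (by omega) j (by omega) hij
  simpa using this

/-- main recursion: from any walk we obtain a direction `d`. -/
theorem walk_to_d (F : Finset α) (G : Bool → α → Option β)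
    (hG : ∀ (s : Bool), ∀ e ∈ F, ∀ g, G s e = some g → ∃ f ∈ F, f ≠ e ∧ G s f = some g) :
    ∀ fuel k e s₀, Walk F G k e s₀ → F.card - k ≤ fuel →
    ∃ d : α → ℤ, (∀ x, d x = 0 ∨ d x = 1 ∨ d x = -1) ∧
      (∀ x, d x ≠ 0 → x ∈ F) ∧ (∃ x, d x ≠ 0) ∧
      (∀ (s : Bool) (g : β), ∑ x ∈ F.filter (fun x => G s x = some g), d x = 0) := by
  intro fuel
  induction fuel with
  | zero =>
    intro k e s₀ W hf
    exfalso
    have := W.card_le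
    omega
  | succ m IH =>
    intro k e s₀ W hf
    set s := sig s₀ k with hs
    cases hx : G s (e k) with
    | none =>
      -- PATH case
      have hstart : G (!s₀) (e 0) = none := by
        rcases W.start with h | h
        · exact h
        · exfalso
          have := h (e k) (W.mem k (le_refl k)) s
          rw [hx] at this
          simp at this
      apply build_d F G e 0 k (by omega) (fun i _ h2 => W.mem i h2)
        (fun i j _ h2 _ h4 h5 => W.inj i h2 j h4 h5)
      intro s' g
      exact path_sum_zero G e s₀ k (fun i h => (W.link i h).1) hstart (by rw [← hs, hx]) s' g
    | some g =>
      by_cases hrep : ∃ j, j < k ∧ sig s₀ j = s ∧ G (sig s₀ j) (e j) = some g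
      · -- CLOSED case (group repeat): segment [j+1, k]
        obtain ⟨j, hjk, hjs, hjg⟩ := hrep
        have hpar : sig s₀ (j + 1) ≠ sig s₀ k := by
          rw [sig_succ, hjs, ← hs]
          cases s <;> simp
        apply build_d F G e (j + 1) k (by omega) (fun i _ h2 => W.mem i h2)
          (fun i j' _ h2 _ h4 h5 => W.inj i h2 j' h4 h5)
        intro s' g'
        apply closed_sum_zero G e s₀ (j + 1) k g (by omega)
          (fun i _ h2 => (W.link i h2).1) hpar (by rw [← hs, hx])
        · -- hwb : G (sig s₀ k) (e (j+1)) = some g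
          rw [← hs, ← hjs, ← (W.link j hjk).1, hjg]
      · obtain ⟨f, hfF, hfne, hfg⟩ := hG s (e k) (W.mem k (le_refl k)) g hx
        by_cases hfin : ∃ i, i ≤ k ∧ e i = f
        · -- f occurs in the walk: full cycle or contradiction
          obtain ⟨i, hik, hei⟩ := hfin
          have hink : i ≠ k := fun h => hfne (by rw [← hei, h])
          have hi0 : i = 0 := by
            by_contra hi0
            -- interior: produce a hrep witness
            have hilt : i < k := lt_of_le_of_ne hik hink
            have hipos : 0 < i := Nat.pos_of_ne_zero hi0
            apply hrep
            by_cases hsi : sig s₀ i = s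
            · exact ⟨i, hilt, hsi, by rw [hsi, hei, hfg]⟩
            · refine ⟨i - 1, by omega, ?_, ?_⟩
              · rw [sig_pred s₀ i hipos]; exact bool_not_eq hsi
              · have h1 : sig s₀ (i - 1) = s := by
                  rw [sig_pred s₀ i hipos]; exact bool_not_eq hsi
                rw [h1]
                have h2 := (W.link (i - 1) (by omega)).1
                rw [h1] at h2
                have h3 : i - 1 + 1 = i := by omega
                rw [h3] at h2
                rw [h2, hei, hfg]
          -- i = 0 : full cycle; first, k ≥ 1 and sig s₀ 0 ≠ s
          subst hi0
          have hk1 : 0 < k := Nat.pos_of_ne_zero (fun h => hink h.symm)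
          have hs0 : sig s₀ 0 ≠ s := by
            intro h0
            apply hrep
            refine ⟨0, hk1, h0, ?_⟩
            rw [h0, hei, hfg]
          apply build_d F G e 0 k (by omega) (fun i _ h2 => W.mem i h2)
            (fun i j' _ h2 _ h4 h5 => W.inj i h2 j' h4 h5)
          intro s' g'
          apply closed_sum_zero G e s₀ 0 k g (by omega)
            (fun i _ h2 => (W.link i h2).1) (by rw [← hs]; exact hs0)
            (by rw [← hs, hx]) (by rw [← hs, hei, hfg])
        · -- extend the walk
          push_neg at hfin
          set e' : ℕ → α := Function.update e (k + 1) f with he'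
          have he'k : ∀ i ≤ k, e' i = e i := by
            intro i hi
            rw [he', Function.update_of_ne (by omega)]
          have he'succ : e' (k + 1) = f := by rw [he', Function.update_self]
          have W' : Walk F G (k + 1) e' s₀ := by
            constructor
            · intro i hi
              rcases Nat.lt_or_ge i (k + 1) with h | h
              · rw [he'k i (by omega)]; exact W.mem i (by omega)
              · have : i = k + 1 := by omega
                subst this; rw [he'succ]; exact hfF
            · intro i hi j hj hij
              rcases Nat.lt_or_ge i (k + 1) with h1 | h1 <;>
                rcases Nat.lt_or_ge j (k + 1) with h2 | h2
              · rw [he'k i (by omega), he'k j (by omega)] at hij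
                exact W.inj i (by omega) j (by omega) hij
              · have hj' : j = k + 1 := by omega
                subst hj'
                rw [he'k i (by omega), he'succ] at hij
                exact absurd hij (hfin i (by omega))
              · have hi' : i = k + 1 := by omega
                subst hi'
                rw [he'succ, he'k j (by omega)] at hij
                exact absurd hij.symm (hfin j (by omega))
              · omega
            · intro i hi
              rcases Nat.lt_or_ge i k with h | h
              · rw [he'k i (by omega), he'k (i + 1) (by omega)]
                exact W.link i h
              · have : i = k := by omega
                subst this
                rw [he'k i (le_refl i), he'succ, ← hs, hx, hfg]
                simp
            · rcases W.start with h | h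
              · left; rw [he'k 0 (by omega)]; exact h
              · right; exact h
          have hcard := W'.card_le
          exact IH (k + 1) e' s₀ W' (by omega)

/-- The core combinatorial lemma. -/
theorem core_lemma (F : Finset α) (hF : F.Nonempty) (G : Bool → α → Option β)
    (hG : ∀ (s : Bool), ∀ e ∈ F, ∀ g, G s e = some g → ∃ f ∈ F, f ≠ e ∧ G s f = some g) :
    ∃ d : α → ℤ, (∀ x, d x = 0 ∨ d x = 1 ∨ d x = -1) ∧
      (∀ x, d x ≠ 0 → x ∈ F) ∧ (∃ x, d x ≠ 0) ∧
      (∀ (s : Bool) (g : β), ∑ x ∈ F.filter (fun x => G s x = some g), d x = 0) := by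
  by_cases hfree : ∃ x ∈ F, ∃ s : Bool, G s x = none
  · obtain ⟨x, hxF, s, hxs⟩ := hfree
    have W : Walk F G 0 (fun _ => x) (!s) := by
      constructor
      · intro i _; exact hxF
      · intro i hi j hj _; omega
      · intro i hi; omega
      · left; simp [hxs]
    exact walk_to_d F G hG F.card 0 (fun _ => x) (!s) W (by omega)
  · push_neg at hfree
    obtain ⟨x, hxF⟩ := hF
    have W : Walk F G 0 (fun _ => x) true := by
      constructor
      · intro i _; exact hxF
      · intro i hi j hj _; omega
      · intro i hi; omega
      · right
        intro y hy t
        have := hfree y hy t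
        cases hyt : G t y
        · exact absurd hyt this
        · simp
    exact walk_to_d F G hG F.card 0 (fun _ => x) true W (by omega)

end Core

section Outer
variable {α : Type*} [DecidableEq α]
open scoped Classical

def IsIntQ (q : ℚ) : Prop := ∃ z : ℤ, q = (z : ℚ)

lemma IsIntQ.add {a b : ℚ} (ha : IsIntQ a) (hb : IsIntQ b) : IsIntQ (a + b) := by
  obtain ⟨z, rfl⟩ := ha; obtain ⟨w, rfl⟩ := hb; exact ⟨z + w, by push_cast; ring⟩

lemma IsIntQ.sub {a b : ℚ} (ha : IsIntQ a) (hb : IsIntQ b) : IsIntQ (a - b) := by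
  obtain ⟨z, rfl⟩ := ha; obtain ⟨w, rfl⟩ := hb; exact ⟨z - w, by push_cast; ring⟩

lemma IsIntQ.intCast (z : ℤ) : IsIntQ (z : ℚ) := ⟨z, rfl⟩

lemma IsIntQ.sum {β : Type*} {s : Finset β} {f : β → ℚ} (h : ∀ x ∈ s, IsIntQ (f x)) :
    IsIntQ (∑ x ∈ s, f x) := by
  induction s using Finset.induction_on with
  | empty => exact ⟨0, by simp⟩
  | insert a s hx ih =>
    rw [Finset.sum_insert hx]
    exact (h _ (Finset.mem_insert_self _ _)).add
      (ih (fun x hxs => h x (Finset.mem_insert_of_mem hxs)))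

noncomputable def vsum (y : α → ℚ) (P : Finset α) : ℚ := ∑ x ∈ P, y x

/-- laminarity for a finset family -/
def LamF (fam : Finset (Finset α)) : Prop :=
  ∀ P ∈ fam, ∀ Q ∈ fam, P ⊆ Q ∨ Q ⊆ P ∨ P ∩ Q = ∅

/-- the minimal "integral" member of `fam` containing `x`, if any -/
def PiCond (fam : Finset (Finset α)) (y : α → ℚ) (x : α) (Q : Finset α) : Prop :=
  Q ∈ fam ∧ x ∈ Q ∧ IsIntQ (vsum y Q) ∧
    ∀ Q' ∈ fam, x ∈ Q' → IsIntQ (vsum y Q') → Q.card ≤ Q'.card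

noncomputable def piMin (fam : Finset (Finset α)) (y : α → ℚ) (x : α) : Option (Finset α) :=
  if h : ∃ Q, PiCond fam y x Q then some h.choose else none

lemma piMin_mem {fam : Finset (Finset α)} {y : α → ℚ} {x : α} {Q : Finset α}
    (h : piMin fam y x = some Q) :
    PiCond fam y x Q := by
  rw [piMin] at h
  split at h
  case isFalse => exact absurd h (by simp)
  case isTrue hne =>
    rw [Option.some_inj] at h
    subst h
    exact hne.choose_spec

lemma piMin_none {fam : Finset (Finset α)} {y : α → ℚ} {x : α}
    (h : piMin fam y x = none) :
    ∀ Q ∈ fam, x ∈ Q → ¬IsIntQ (vsum y Q) := by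
  rw [piMin] at h
  split at h
  case isTrue => exact absurd h (by simp)
  case isFalse hne =>
    intro Q hQ hxQ hiQ
    apply hne
    obtain ⟨R, hR, hRmin⟩ := Finset.exists_min_image
      (fam.filter (fun P => x ∈ P ∧ IsIntQ (vsum y P))) Finset.card
      ⟨Q, Finset.mem_filter.2 ⟨hQ, hxQ, hiQ⟩⟩
    simp only [Finset.mem_filter] at hR
    exact ⟨R, hR.1, hR.2.1, hR.2.2, fun Q' hQ' hxQ' hiQ' =>
      hRmin Q' (Finset.mem_filter.2 ⟨hQ', hxQ', hiQ'⟩)⟩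

lemma piMin_isSome {fam : Finset (Finset α)} {y : α → ℚ} {x : α} {Q : Finset α}
    (hQ : Q ∈ fam) (hx : x ∈ Q) (hi : IsIntQ (vsum y Q)) :
    ∃ Q', piMin fam y x = some Q' := by
  cases h : piMin fam y x with
  | none => exact absurd hi (piMin_none h Q hQ hx)
  | some Q' => exact ⟨Q', rfl⟩

lemma piMin_subset {fam : Finset (Finset α)} (hlam : LamF fam) {y : α → ℚ} {x : α}
    {Q : Finset α} (h : piMin fam y x = some Q) :
    ∀ Q' ∈ fam, x ∈ Q' → IsIntQ (vsum y Q') → Q ⊆ Q' := by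
  intro Q' hQ' hxQ' hiQ'
  obtain ⟨hQf, hxQ, hiQ, hmin⟩ := piMin_mem h
  rcases hlam Q hQf Q' hQ' with hss | hss | hdisj
  · exact hss
  · have : Q' = Q := Finset.eq_of_subset_of_card_le hss (hmin Q' hQ' hxQ' hiQ')
    rw [this]
  · exfalso
    have : x ∈ Q ∩ Q' := Finset.mem_inter.2 ⟨hxQ, hxQ'⟩
    rw [hdisj] at this
    exact absurd this (Finset.notMem_empty x)

/-- decomposition of a sum over an integral member into fibers of `piMin` -/
lemma sum_decomp {M : Type*} [AddCommMonoid M] {fam : Finset (Finset α)} (hlam : LamF fam)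
    {y : α → ℚ} {P : Finset α} (hP : P ∈ fam) (hPi : IsIntQ (vsum y P)) (f : α → M) :
    ∑ x ∈ P, f x = ∑ Q ∈ fam.filter (fun Q => IsIntQ (vsum y Q) ∧ Q ⊆ P),
      ∑ x ∈ Q.filter (fun z => piMin fam y z = some Q), f x := by
  have hmaps : ∀ x ∈ P, piMin fam y x ∈
      (fam.filter (fun Q => IsIntQ (vsum y Q) ∧ Q ⊆ P)).image some := by
    intro x hx
    obtain ⟨Q', hQ'⟩ := piMin_isSome hP hx hPi
    obtain ⟨h1, h2, h3, _⟩ := piMin_mem hQ'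
    rw [hQ']
    exact Finset.mem_image_of_mem some
      (Finset.mem_filter.2 ⟨h1, h3, piMin_subset hlam hQ' P hP hx hPi⟩)
  rw [← Finset.sum_fiberwise_of_maps_to hmaps f]
  rw [Finset.sum_image (fun _ _ _ _ h => Option.some_inj.1 h)]
  apply Finset.sum_congr rfl
  intro Q hQ
  simp only [Finset.mem_filter] at hQ
  apply Finset.sum_congr _ (fun _ _ => rfl)
  ext z
  simp only [Finset.mem_filter]
  constructor
  · rintro ⟨hzP, hz⟩
    exact ⟨(piMin_mem hz).2.1, hz⟩
  · rintro ⟨hzQ, hz⟩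
    exact ⟨hQ.2.2 hzQ, hz⟩

/-- fiber sums of `y` are integral -/
lemma fiber_sum_int {fam : Finset (Finset α)} (hlam : LamF fam) {y : α → ℚ} :
    ∀ Q ∈ fam, IsIntQ (vsum y Q) →
      IsIntQ (∑ x ∈ Q.filter (fun z => piMin fam y z = some Q), y x) := by
  suffices H : ∀ n, ∀ Q, Q ∈ fam → Q.card = n → IsIntQ (vsum y Q) →
      IsIntQ (∑ x ∈ Q.filter (fun z => piMin fam y z = some Q), y x) by
    exact fun Q hQ hi => H Q.card Q hQ rfl hi
  intro n
  induction n using Nat.strong_induction_on with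
  | _ n IH =>
    intro Q hQ hcard hiQ
    have hdec := sum_decomp hlam hQ hiQ y
    have hQself : Q ∈ fam.filter (fun Q' => IsIntQ (vsum y Q') ∧ Q' ⊆ Q) :=
      Finset.mem_filter.2 ⟨hQ, hiQ, Finset.Subset.refl Q⟩
    rw [← Finset.add_sum_erase _ _ hQself] at hdec
    have heq : ∑ x ∈ Q.filter (fun z => piMin fam y z = some Q), y x =
        vsum y Q - ∑ Q' ∈ (fam.filter (fun Q' => IsIntQ (vsum y Q') ∧ Q' ⊆ Q)).erase Q,
          ∑ x ∈ Q'.filter (fun z => piMin fam y z = some Q'), y x := by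
      rw [vsum, hdec]; ring
    rw [heq]
    apply hiQ.sub
    apply IsIntQ.sum
    intro Q' hQ'
    simp only [Finset.mem_erase, Finset.mem_filter] at hQ'
    obtain ⟨hne, hQ'f, hiQ', hss⟩ := hQ'
    exact IH Q'.card (hcard ▸ Finset.card_lt_card (Finset.ssubset_iff_subset_ne.2 ⟨hss, hne⟩))
      Q' hQ'f rfl hiQ'
/-- the fractional support -/
noncomputable def fracSet (S : Finset α) (y : α → ℚ) : Finset α :=
  S.filter (fun x => ¬IsIntQ (y x))

/-- each nonempty fractional fiber has a second element -/
lemma fiber_two {fam : Finset (Finset α)} (hlam : LamF fam) {S : Finset α}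
    (hSS : ∀ P ∈ fam, P ⊆ S) {y : α → ℚ} {x : α} {Q : Finset α}
    (hx : x ∈ fracSet S y) (hQ : piMin fam y x = some Q) :
    ∃ f ∈ fracSet S y, f ≠ x ∧ piMin fam y f = some Q := by
  obtain ⟨hQf, hxQ, hiQ, -⟩ := piMin_mem hQ
  have hw := fiber_sum_int hlam Q hQf hiQ
  -- split fiber into fractional / integral parts
  set fib := Q.filter (fun z => piMin fam y z = some Q) with hfib
  have hxfib : x ∈ fib := by
    rw [hfib, Finset.mem_filter]; exact ⟨hxQ, hQ⟩
  set fibF := fib.filter (fun z => ¬IsIntQ (y z)) with hfibF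
  have hxfibF : x ∈ fibF := by
    rw [hfibF, Finset.mem_filter]
    refine ⟨hxfib, ?_⟩
    simp only [fracSet, Finset.mem_filter] at hx
    exact hx.2
  have hsplit : IsIntQ (∑ z ∈ fibF, y z) := by
    have h1 : ∑ z ∈ fibF, y z = (∑ z ∈ fib, y z) - ∑ z ∈ fib.filter (fun z => IsIntQ (y z)), y z := by
      rw [hfibF]
      rw [eq_sub_iff_add_eq, Finset.sum_filter_not_add_sum_filter]
    rw [h1]
    apply hw.sub
    apply IsIntQ.sum
    intro z hz
    exact (Finset.mem_filter.1 hz).2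
  by_contra hno
  push_neg at hno
  have hsingle : fibF = {x} := by
    apply Finset.eq_singleton_iff_unique_mem.2
    refine ⟨hxfibF, ?_⟩
    intro z hz
    by_contra hzx
    simp only [hfibF, hfib, Finset.mem_filter] at hz
    have hzS : z ∈ S := hSS Q hQf hz.1.1
    exact absurd hz.1.2 (hno z (by
      simp only [fracSet, Finset.mem_filter]
      exact ⟨hzS, hz.2⟩) hzx).elim
  rw [hsingle, Finset.sum_singleton] at hsplit
  simp only [fracSet, Finset.mem_filter] at hx
  exact hx.2 hsplit
section Push
variable (S : Finset α) (n : ℕ) (fam : Bool → Finset (Finset α))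

/-- feasibility of a fractional solution -/
def Feas (y : α → ℚ) : Prop :=
  (∀ x, x ∉ S → y x = 0) ∧ (∀ x ∈ S, 0 ≤ y x ∧ y x ≤ 1) ∧
  (∀ s : Bool, ∀ P ∈ fam s,
    ((⌊(P.card : ℚ) / (n : ℚ)⌋ : ℚ) ≤ vsum y P ∧ vsum y P ≤ (⌈(P.card : ℚ) / (n : ℚ)⌉ : ℚ)))

noncomputable def meas (y : α → ℚ) : ℕ :=
  (fracSet S y).card + ((fam true).filter (fun P => ¬IsIntQ (vsum y P))).card +
    ((fam false).filter (fun P => ¬IsIntQ (vsum y P))).card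

lemma frac_lt_floor_ceil {q : ℚ} (h : ¬IsIntQ q) : ((⌊q⌋ : ℚ) < q ∧ q < (⌈q⌉ : ℚ)) := by
  constructor
  · rcases lt_or_eq_of_le (Int.floor_le q) with h' | h'
    · exact h'
    · exact absurd ⟨⌊q⌋, h'.symm⟩ h
  · rcases lt_or_eq_of_le (Int.le_ceil q) with h' | h'
    · exact h'
    · exact absurd ⟨⌈q⌉, h'⟩ h

theorem push_step (hlam : ∀ s, LamF (fam s)) (hSS : ∀ s, ∀ P ∈ fam s, P ⊆ S)
    (y : α → ℚ) (hy : Feas S n fam y) (hfrac : (fracSet S y).Nonempty) :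
    ∃ y', Feas S n fam y' ∧ meas S fam y' < meas S fam y := by
  obtain ⟨hy0, hybox, hyfam⟩ := hy
  set F := fracSet S y with hF
  -- apply the core lemma
  obtain ⟨d, hd01, hdsupp, ⟨x₀, hx₀⟩, hdsum⟩ :=
    core_lemma F hfrac (fun s x => piMin (fam s) y x)
      (fun s e he g hg => by
        obtain ⟨f, hf1, hf2, hf3⟩ := fiber_two (hlam s) (hSS s) he hg
        exact ⟨f, hf1, hf2, hf3⟩)
  have hFS : F ⊆ S := Finset.filter_subset _ _
  -- sums of d over members
  set c : Finset α → ℤ := fun P => ∑ x ∈ P, d x with hc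
  have hczero : ∀ s : Bool, ∀ P ∈ fam s, IsIntQ (vsum y P) → c P = 0 := by
    intro s P hP hiP
    rw [hc]
    simp only
    rw [sum_decomp (hlam s) hP hiP d]
    apply Finset.sum_eq_zero
    intro Q hQ
    simp only [Finset.mem_filter] at hQ
    have hsub : F.filter (fun x => piMin (fam s) y x = some Q) ⊆
        Q.filter (fun z => piMin (fam s) y z = some Q) := by
      intro z hz
      simp only [Finset.mem_filter] at hz ⊢
      exact ⟨(piMin_mem hz.2).2.1, hz.2⟩
    rw [← Finset.sum_subset hsub]
    · exact hdsum s Q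
    · intro z hz hzn
      by_contra hdz
      apply hzn
      simp only [Finset.mem_filter] at hz ⊢
      exact ⟨hdsupp z hdz, hz.2⟩
  have hcfrac : ∀ s : Bool, ∀ P ∈ fam s, c P ≠ 0 → ¬IsIntQ (vsum y P) :=
    fun s P hP hcP hiP => hcP (hczero s P hP hiP)
  -- gaps
  set gapE : α → ℚ := fun x => if d x = 1 then (⌈y x⌉ : ℚ) - y x else y x - (⌊y x⌋ : ℚ)
    with hgapE
  set gapP : Finset α → ℚ := fun P =>
    (if 0 < c P then (⌈vsum y P⌉ : ℚ) - vsum y P else vsum y P - (⌊vsum y P⌋ : ℚ)) /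
      |(c P : ℚ)| with hgapP
  set T : Finset ℚ := (F.filter (fun x => d x ≠ 0)).image gapE ∪
    ((fam true ∪ fam false).filter (fun P => c P ≠ 0)).image gapP with hT
  have hTne : T.Nonempty := by
    refine ⟨gapE x₀, ?_⟩
    rw [hT]
    apply Finset.mem_union_left
    exact Finset.mem_image_of_mem _ (Finset.mem_filter.2 ⟨hdsupp x₀ hx₀, hx₀⟩)
  set t := T.min' hTne with ht
  have hfracE : ∀ x ∈ F, ¬IsIntQ (y x) := by
    intro x hx
    simp only [hF, fracSet, Finset.mem_filter] at hx
    exact hx.2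
  have hTpos : ∀ q ∈ T, 0 < q := by
    intro q hq
    rw [hT] at hq
    rcases Finset.mem_union.1 hq with h | h
    · obtain ⟨x, hx, rfl⟩ := Finset.mem_image.1 h
      simp only [Finset.mem_filter] at hx
      obtain ⟨h1, h2⟩ := frac_lt_floor_ceil (hfracE x hx.1)
      simp only [hgapE]
      by_cases hdx : d x = 1
      · rw [if_pos hdx]; linarith
      · rw [if_neg hdx]; linarith
    · obtain ⟨P, hP, rfl⟩ := Finset.mem_image.1 h
      simp only [Finset.mem_filter, Finset.mem_union] at hP
      obtain ⟨hPmem, hcP⟩ := hP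
      have hPfam : ∃ s : Bool, P ∈ fam s := by
        rcases hPmem with h' | h'
        · exact ⟨true, h'⟩
        · exact ⟨false, h'⟩
      obtain ⟨s, hPs⟩ := hPfam
      obtain ⟨h1, h2⟩ := frac_lt_floor_ceil (hcfrac s P hPs hcP)
      simp only [hgapP]
      apply div_pos
      · by_cases hcpos : 0 < c P
        · rw [if_pos hcpos]; linarith
        · rw [if_neg hcpos]; linarith
      · simp only [abs_pos, ne_eq, Int.cast_eq_zero]
        exact hcP
  have htpos : 0 < t := hTpos t (T.min'_mem hTne)
  have htleE : ∀ x, d x ≠ 0 → t ≤ gapE x := by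
    intro x hdx
    apply T.min'_le
    rw [hT]
    exact Finset.mem_union_left _
      (Finset.mem_image_of_mem _ (Finset.mem_filter.2 ⟨hdsupp x hdx, hdx⟩))
  have htleP : ∀ s : Bool, ∀ P ∈ fam s, c P ≠ 0 → t ≤ gapP P := by
    intro s P hPs hcP
    apply T.min'_le
    rw [hT]
    apply Finset.mem_union_right
    apply Finset.mem_image_of_mem
    apply Finset.mem_filter.2
    refine ⟨Finset.mem_union.2 ?_, hcP⟩
    cases s
    · exact Or.inr hPs
    · exact Or.inl hPs
  -- the pushed solution
  set y' : α → ℚ := fun x => y x + t * ((d x : ℤ) : ℚ) with hy'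
  have hy'eq : ∀ x, d x = 0 → y' x = y x := by
    intro x hdx
    rw [hy']; simp [hdx]
  have hvsum' : ∀ P : Finset α, vsum y' P = vsum y P + t * ((c P : ℤ) : ℚ) := by
    intro P
    rw [hy', hc]
    simp only [vsum]
    rw [Finset.sum_add_distrib, ← Finset.mul_sum]
    push_cast
    ring
  -- element bounds
  have helem : ∀ x ∈ S, 0 ≤ y' x ∧ y' x ≤ 1 := by
    intro x hx
    rcases hd01 x with hdx | hdx | hdx
    · rw [hy'eq x hdx]; exact hybox x hx
    · have hle := htleE x (by rw [hdx]; norm_num)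
      simp only [hgapE] at hle
      rw [if_pos hdx] at hle
      have hceil : (⌈y x⌉ : ℚ) ≤ 1 := by
        have : ⌈y x⌉ ≤ (1 : ℤ) := Int.ceil_le.mpr (by exact_mod_cast (hybox x hx).2)
        exact_mod_cast this
      simp only [hy', hdx]
      push_cast
      constructor
      · linarith [(hybox x hx).1]
      · linarith
    · have hle := htleE x (by rw [hdx]; norm_num)
      simp only [hgapE] at hle
      rw [if_neg (by rw [hdx]; norm_num)] at hle
      have hfloor : (0 : ℚ) ≤ (⌊y x⌋ : ℚ) := by
        have : (0 : ℤ) ≤ ⌊y x⌋ := Int.le_floor.mpr (by exact_mod_cast (hybox x hx).1)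
        exact_mod_cast this
      simp only [hy', hdx]
      push_cast
      constructor
      · linarith
      · linarith [(hybox x hx).2]
  -- family bounds
  have hfam' : ∀ s : Bool, ∀ P ∈ fam s,
      ((⌊(P.card : ℚ) / (n : ℚ)⌋ : ℚ) ≤ vsum y' P ∧
        vsum y' P ≤ (⌈(P.card : ℚ) / (n : ℚ)⌉ : ℚ)) := by
    intro s P hPs
    obtain ⟨hlo, hhi⟩ := hyfam s P hPs
    rw [hvsum' P]
    rcases lt_trichotomy (c P) 0 with hcP | hcP | hcP
    · -- c P < 0
      have hcne : c P ≠ 0 := by omega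
      have hfracP := hcfrac s P hPs hcne
      obtain ⟨hf1, hf2⟩ := frac_lt_floor_ceil hfracP
      have hle := htleP s P hPs hcne
      simp only [hgapP] at hle
      rw [if_neg (not_lt.mpr (le_of_lt hcP))] at hle
      have habs : |((c P : ℤ) : ℚ)| = -((c P : ℤ) : ℚ) := by
        apply abs_of_neg
        exact_mod_cast hcP
      rw [habs] at hle
      have hcQ : (0 : ℚ) < -((c P : ℤ) : ℚ) := by
        have : ((c P : ℤ) : ℚ) < 0 := by exact_mod_cast hcP
        linarith
      have hkey : t * (-((c P : ℤ) : ℚ)) ≤ vsum y P - (⌊vsum y P⌋ : ℚ) := by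
        calc t * (-((c P : ℤ) : ℚ))
            ≤ ((vsum y P - (⌊vsum y P⌋ : ℚ)) / (-((c P : ℤ) : ℚ))) * (-((c P : ℤ) : ℚ)) :=
              mul_le_mul_of_nonneg_right hle (le_of_lt hcQ)
          _ = vsum y P - (⌊vsum y P⌋ : ℚ) := div_mul_cancel₀ _ (ne_of_gt hcQ)
      have hfl : (⌊(P.card : ℚ) / (n : ℚ)⌋ : ℚ) ≤ (⌊vsum y P⌋ : ℚ) := by
        have : ⌊(P.card : ℚ) / (n : ℚ)⌋ ≤ ⌊vsum y P⌋ := Int.le_floor.mpr hlo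
        exact_mod_cast this
      constructor
      · linarith
      · nlinarith
    · -- c P = 0
      rw [hcP]
      push_cast
      constructor
      · simpa using hlo
      · simpa using hhi
    · -- 0 < c P
      have hcne : c P ≠ 0 := by omega
      have hfracP := hcfrac s P hPs hcne
      obtain ⟨hf1, hf2⟩ := frac_lt_floor_ceil hfracP
      have hle := htleP s P hPs hcne
      simp only [hgapP] at hle
      rw [if_pos hcP] at hle
      have hcQ : (0 : ℚ) < ((c P : ℤ) : ℚ) := by exact_mod_cast hcP
      have habs : |((c P : ℤ) : ℚ)| = ((c P : ℤ) : ℚ) := abs_of_pos hcQ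
      rw [habs] at hle
      have hkey : t * ((c P : ℤ) : ℚ) ≤ (⌈vsum y P⌉ : ℚ) - vsum y P := by
        calc t * ((c P : ℤ) : ℚ)
            ≤ (((⌈vsum y P⌉ : ℚ) - vsum y P) / ((c P : ℤ) : ℚ)) * ((c P : ℤ) : ℚ) :=
              mul_le_mul_of_nonneg_right hle (le_of_lt hcQ)
          _ = (⌈vsum y P⌉ : ℚ) - vsum y P := div_mul_cancel₀ _ (ne_of_gt hcQ)
      have hcl : (⌈vsum y P⌉ : ℚ) ≤ (⌈(P.card : ℚ) / (n : ℚ)⌉ : ℚ) := by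
        have : ⌈vsum y P⌉ ≤ ⌈(P.card : ℚ) / (n : ℚ)⌉ := Int.ceil_le.mpr hhi
        exact_mod_cast this
      constructor
      · nlinarith
      · linarith
  have hFeas' : Feas S n fam y' := by
    refine ⟨?_, helem, hfam'⟩
    intro x hx
    have hdx : d x = 0 := by
      by_contra hdx
      exact hx (hFS (hdsupp x hdx))
    rw [hy'eq x hdx]
    exact hy0 x hx
  -- monotonicity of the three components
  have hsubF : fracSet S y' ⊆ fracSet S y := by
    intro x hx
    simp only [fracSet, Finset.mem_filter] at hx ⊢
    refine ⟨hx.1, ?_⟩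
    intro hint
    rcases hd01 x with hdx | hdx | hdx
    · rw [hy'eq x hdx] at hx; exact hx.2 hint
    · exact (hfracE x (hdsupp x (by rw [hdx]; norm_num))) hint
    · exact (hfracE x (hdsupp x (by rw [hdx]; norm_num))) hint
  have hsubfam : ∀ s : Bool, (fam s).filter (fun P => ¬IsIntQ (vsum y' P)) ⊆
      (fam s).filter (fun P => ¬IsIntQ (vsum y P)) := by
    intro s P hP
    simp only [Finset.mem_filter] at hP ⊢
    refine ⟨hP.1, ?_⟩
    intro hint
    apply hP.2
    rw [hvsum' P, hczero s P hP.1 hint]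
    push_cast
    simpa using hint
  -- strict decrease: the minimizer becomes integral
  have hwit : (∃ x ∈ fracSet S y, x ∉ fracSet S y') ∨
      (∃ s : Bool, ∃ P ∈ (fam s).filter (fun P => ¬IsIntQ (vsum y P)),
        P ∉ (fam s).filter (fun P => ¬IsIntQ (vsum y' P))) := by
    have hmin : t ∈ (F.filter (fun x => d x ≠ 0)).image gapE ∪
        ((fam true ∪ fam false).filter (fun P => c P ≠ 0)).image gapP := by
      rw [← hT]; exact T.min'_mem hTne
    rcases Finset.mem_union.1 hmin with h | h
    · left
      obtain ⟨x, hx, hgx⟩ := Finset.mem_image.1 h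
      simp only [Finset.mem_filter] at hx
      refine ⟨x, hx.1, ?_⟩
      simp only [fracSet, Finset.mem_filter, not_and, not_not]
      intro _
      rcases hd01 x with hdx | hdx | hdx
      · exact absurd hdx hx.2
      · simp only [hy', hdx]
        simp only [hgapE] at hgx
        rw [if_pos hdx] at hgx
        push_cast
        rw [← hgx]
        exact ⟨⌈y x⌉, by ring⟩
      · simp only [hy', hdx]
        simp only [hgapE] at hgx
        rw [if_neg (by rw [hdx]; norm_num)] at hgx
        push_cast
        rw [← hgx]
        exact ⟨⌊y x⌋, by ring⟩
    · right
      obtain ⟨P, hP, hgP⟩ := Finset.mem_image.1 h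
      simp only [Finset.mem_filter, Finset.mem_union] at hP
      obtain ⟨hPmem, hcP⟩ := hP
      have hPfam : ∃ s : Bool, P ∈ fam s := by
        rcases hPmem with h' | h'
        · exact ⟨true, h'⟩
        · exact ⟨false, h'⟩
      obtain ⟨s, hPs⟩ := hPfam
      refine ⟨s, P, Finset.mem_filter.2 ⟨hPs, hcfrac s P hPs hcP⟩, ?_⟩
      simp only [Finset.mem_filter, not_and, not_not]
      intro _
      rw [hvsum' P]
      simp only [hgapP] at hgP
      rcases lt_or_ge 0 (c P) with hcpos | hcneg
      · rw [if_pos hcpos] at hgP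
        have hcQ : (0 : ℚ) < ((c P : ℤ) : ℚ) := by exact_mod_cast hcpos
        have habs : |((c P : ℤ) : ℚ)| = ((c P : ℤ) : ℚ) := abs_of_pos hcQ
        rw [habs] at hgP
        have : t * ((c P : ℤ) : ℚ) = (⌈vsum y P⌉ : ℚ) - vsum y P := by
          rw [← hgP, div_mul_cancel₀ _ (ne_of_gt hcQ)]
        exact ⟨⌈vsum y P⌉, by rw [this]; ring⟩
      · have hcneg' : c P < 0 := by omega
        rw [if_neg (not_lt.mpr (le_of_lt hcneg'))] at hgP
        have hcQ : ((c P : ℤ) : ℚ) < 0 := by exact_mod_cast hcneg'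
        have habs : |((c P : ℤ) : ℚ)| = -((c P : ℤ) : ℚ) := abs_of_neg hcQ
        rw [habs] at hgP
        have : t * (-((c P : ℤ) : ℚ)) = vsum y P - (⌊vsum y P⌋ : ℚ) := by
          rw [← hgP, div_mul_cancel₀ _ (by linarith : -((c P : ℤ) : ℚ) ≠ 0)]
        exact ⟨⌊vsum y P⌋, by nlinarith [this]⟩
  refine ⟨y', hFeas', ?_⟩
  rw [meas, meas]
  rcases hwit with ⟨x, hx1, hx2⟩ | ⟨s, P, hP1, hP2⟩
  · have h1 : (fracSet S y').card < (fracSet S y).card :=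
      Finset.card_lt_card (Finset.ssubset_iff_of_subset hsubF |>.mpr ⟨x, hx1, hx2⟩)
    have h2 := Finset.card_le_card (hsubfam true)
    have h3 := Finset.card_le_card (hsubfam false)
    omega
  · have h1 := Finset.card_le_card hsubF
    have h2 := Finset.card_le_card (hsubfam true)
    have h3 := Finset.card_le_card (hsubfam false)
    have h4 : ((fam s).filter (fun P => ¬IsIntQ (vsum y' P))).card <
        ((fam s).filter (fun P => ¬IsIntQ (vsum y P))).card :=
      Finset.card_lt_card (Finset.ssubset_iff_of_subset (hsubfam s) |>.mpr ⟨P, hP1, hP2⟩)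
    cases s
    · omega
    · omega
end Push

theorem exists_integral (S : Finset α) (n : ℕ) (fam : Bool → Finset (Finset α))
    (hlam : ∀ s, LamF (fam s)) (hSS : ∀ s, ∀ P ∈ fam s, P ⊆ S) :
    ∀ N (y : α → ℚ), Feas S n fam y → meas S fam y ≤ N →
    ∃ y', Feas S n fam y' ∧ fracSet S y' = ∅ := by
  intro N
  induction N with
  | zero =>
    intro y hy hm
    refine ⟨y, hy, ?_⟩
    have : (fracSet S y).card = 0 := by
      have := hm
      unfold meas at this
      omega
    exact Finset.card_eq_zero.1 this
  | succ N IH =>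
    intro y hy hm
    by_cases hfrac : (fracSet S y).Nonempty
    · obtain ⟨y', hy', hm'⟩ := push_step S n fam hlam hSS y hy hfrac
      exact IH y' hy' (by omega)
    · refine ⟨y, hy, ?_⟩
      rw [Finset.not_nonempty_iff_eq_empty] at hfrac
      exact hfrac
end Outer

end NWProof

/-- A family of finite sets is laminar if any two members are nested or disjoint. -/
def LaminarFam {α : Type*} [DecidableEq α] (F : Set (Finset α)) : Prop :=
  ∀ A ∈ F, ∀ B ∈ F, A ⊆ B ∨ B ⊆ A ∨ A ∩ B = ∅

/-- Nash-Williams' laminar family lemma: for two laminar families `A, B` of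
subsets of a finite set `S` and a positive integer `n`, there is a subset
`A₀ ⊆ S` with `⌊|P|/n⌋ ≤ |A₀ ∩ P| ≤ ⌈|P|/n⌉` for every `P ∈ A ∪ B`. -/
theorem nash_williams_laminar {α : Type*} [DecidableEq α]
    (S : Finset α) (A B : Set (Finset α))
    (hA : LaminarFam A) (hB : LaminarFam B)
    (hAS : ∀ P ∈ A, P ⊆ S) (hBS : ∀ P ∈ B, P ⊆ S)
    (n : ℕ) (hn : 0 < n) :
    ∃ A₀ : Finset α, A₀ ⊆ S ∧ ∀ P ∈ A ∪ B,
      (⌊(P.card : ℚ) / n⌋ ≤ ((A₀ ∩ P).card : ℤ) ∧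
       ((A₀ ∩ P).card : ℤ) ≤ ⌈(P.card : ℚ) / n⌉) := by
  classical
  open NWProof in
  -- finsetize the families
  set 𝒜 : Finset (Finset α) := S.powerset.filter (fun P => P ∈ A) with h𝒜
  set ℬ : Finset (Finset α) := S.powerset.filter (fun P => P ∈ B) with hℬ
  have h𝒜mem : ∀ P, P ∈ 𝒜 ↔ P ∈ A := by
    intro P
    rw [h𝒜]
    simp only [Finset.mem_filter, Finset.mem_powerset]
    exact ⟨fun h => h.2, fun h => ⟨hAS P h, h⟩⟩
  have hℬmem : ∀ P, P ∈ ℬ ↔ P ∈ B := by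
    intro P
    rw [hℬ]
    simp only [Finset.mem_filter, Finset.mem_powerset]
    exact ⟨fun h => h.2, fun h => ⟨hBS P h, h⟩⟩
  set fam : Bool → Finset (Finset α) := fun s => if s then 𝒜 else ℬ with hfam
  have hlam : ∀ s, LamF (fam s) := by
    intro s
    cases s
    · intro P hP Q hQ
      exact hB P ((hℬmem P).1 hP) Q ((hℬmem Q).1 hQ)
    · intro P hP Q hQ
      exact hA P ((h𝒜mem P).1 hP) Q ((h𝒜mem Q).1 hQ)
  have hSS : ∀ s, ∀ P ∈ fam s, P ⊆ S := by
    intro s P hP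
    cases s
    · exact hBS P ((hℬmem P).1 hP)
    · exact hAS P ((h𝒜mem P).1 hP)
  -- initial fractional solution
  set y₀ : α → ℚ := fun x => if x ∈ S then ((n : ℚ))⁻¹ else 0 with hy₀
  have hnQ : (0 : ℚ) < (n : ℚ) := by exact_mod_cast hn
  have hFeas₀ : Feas S n fam y₀ := by
    refine ⟨?_, ?_, ?_⟩
    · intro x hx; rw [hy₀]; simp [hx]
    · intro x hx
      rw [hy₀]
      simp only [hx, if_true]
      constructor
      · positivity
      · rw [inv_le_one_iff₀]
        right
        exact_mod_cast hn
    · intro s P hP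
      have hPS := hSS s P hP
      have hv : vsum y₀ P = (P.card : ℚ) / (n : ℚ) := by
        rw [vsum]
        have hcg : ∀ x ∈ P, y₀ x = ((n : ℚ))⁻¹ := fun x hx => by
          rw [hy₀]; simp [hPS hx]
        rw [Finset.sum_congr rfl hcg, Finset.sum_const, nsmul_eq_mul]
        ring
      rw [hv]
      exact ⟨Int.floor_le _, Int.le_ceil _⟩
  obtain ⟨y, hFeas, hfrac⟩ := exists_integral S n fam hlam hSS (meas S fam y₀) y₀ hFeas₀
    (le_refl _)
  obtain ⟨hy0, hybox, hyfam⟩ := hFeas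
  -- y is 0/1 valued on S
  have hy01 : ∀ x ∈ S, y x = 0 ∨ y x = 1 := by
    intro x hx
    have hint : IsIntQ (y x) := by
      by_contra h
      have : x ∈ fracSet S y := Finset.mem_filter.2 ⟨hx, h⟩
      rw [hfrac] at this
      exact absurd this (Finset.notMem_empty x)
    obtain ⟨z, hz⟩ := hint
    obtain ⟨h0, h1⟩ := hybox x hx
    rw [hz] at h0 h1 ⊢
    have hz0 : (0 : ℤ) ≤ z := by exact_mod_cast h0
    have hz1 : z ≤ 1 := by exact_mod_cast h1
    interval_cases z
    · left; norm_num
    · right; norm_num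
  refine ⟨S.filter (fun x => y x = 1), Finset.filter_subset _ _, ?_⟩
  intro P hP
  have hPfam : ∃ s, P ∈ fam s := by
    rcases hP with h | h
    · exact ⟨true, (h𝒜mem P).2 h⟩
    · exact ⟨false, (hℬmem P).2 h⟩
  obtain ⟨s, hPs⟩ := hPfam
  have hPS := hSS s P hPs
  have hinter : S.filter (fun x => y x = 1) ∩ P = P.filter (fun x => y x = 1) := by
    ext x
    simp only [Finset.mem_inter, Finset.mem_filter]
    constructor
    · rintro ⟨⟨-, h2⟩, h3⟩; exact ⟨h3, h2⟩
    · rintro ⟨h1, h2⟩; exact ⟨⟨hPS h1, h2⟩, h1⟩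
  have hcount : vsum y P = ((P.filter (fun x => y x = 1)).card : ℚ) := by
    rw [vsum, ← Finset.sum_filter_add_sum_filter_not P (fun x => y x = 1)]
    have h1 : ∑ x ∈ P.filter (fun x => y x = 1), y x =
        ((P.filter (fun x => y x = 1)).card : ℚ) := by
      rw [Finset.sum_congr rfl (fun x hx => (Finset.mem_filter.1 hx).2)]
      simp
    have h2 : ∑ x ∈ P.filter (fun x => ¬(y x = 1)), y x = 0 := by
      apply Finset.sum_eq_zero
      intro x hx
      obtain ⟨hx1, hx2⟩ := Finset.mem_filter.1 hx
      rcases hy01 x (hPS hx1) with h | h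
      · exact h
      · exact absurd h hx2
    rw [h1, h2, add_zero]
  obtain ⟨hlo, hhi⟩ := hyfam s P hPs
  rw [hcount] at hlo hhi
  rw [hinter]
  constructor
  · exact_mod_cast hlo
  · exact_mod_cast hhi
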